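/- arXiv:2310.13376 — 2 statements merged into one kernel-verified Lean document; each statement's English description precedes it below -/
import Mathlib

section
/- Define a sound classical semantics for BCL: given a Boolean valuation v on atoms, extend it to propositions and say v ⊨ +A iff v(A) = true and v ⊨ −A iff v(A) = false. Then every BCL-derivable sequent Γ ⊢ α is sound: every valuation satisfying all statements of Γ satisfies α; and there is no derivation of ⊥ from the empty set of assumptions. -/
inductive PropF : Type
  | atom : ℕ → PropF
  | and : PropF → PropF → PropF
  | or : PropF → PropF → PropF
  | not : PropF → PropF
  | imp : PropF → PropF → PropF

inductive Stmt : Type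
  | pos : PropF → Stmt
  | neg : PropF → Stmt

def Stmt.conj : Stmt → Stmt
  | .pos A => .neg A
  | .neg A => .pos A

/-- Derivability in bilateral classical logic BCL: `Deriv Γ (some α)` means
`Γ ⊢ α`, and `Deriv Γ none` means `Γ ⊢ ⊥`. -/
inductive Deriv : Set Stmt → Option Stmt → Prop
  | hyp {Γ α} : α ∈ Γ → Deriv Γ (some α)
  | posAndI {Γ A B} : Deriv Γ (some (.pos A)) → Deriv Γ (some (.pos B)) →
      Deriv Γ (some (.pos (.and A B)))
  | posAndE1 {Γ A B} : Deriv Γ (some (.pos (.and A B))) → Deriv Γ (some (.pos A))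
  | posAndE2 {Γ A B} : Deriv Γ (some (.pos (.and A B))) → Deriv Γ (some (.pos B))
  | negAndI1 {Γ A B} : Deriv Γ (some (.neg A)) → Deriv Γ (some (.neg (.and A B)))
  | negAndI2 {Γ A B} : Deriv Γ (some (.neg B)) → Deriv Γ (some (.neg (.and A B)))
  | negAndE {Γ A B α} : Deriv Γ (some (.neg (.and A B))) →
      Deriv (insert (.neg A) Γ) (some α) → Deriv (insert (.neg B) Γ) (some α) →
      Deriv Γ (some α)
  | posOrI1 {Γ A B} : Deriv Γ (some (.pos A)) → Deriv Γ (some (.pos (.or A B)))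
  | posOrI2 {Γ A B} : Deriv Γ (some (.pos B)) → Deriv Γ (some (.pos (.or A B)))
  | posOrE {Γ A B α} : Deriv Γ (some (.pos (.or A B))) →
      Deriv (insert (.pos A) Γ) (some α) → Deriv (insert (.pos B) Γ) (some α) →
      Deriv Γ (some α)
  | negOrI {Γ A B} : Deriv Γ (some (.neg A)) → Deriv Γ (some (.neg B)) →
      Deriv Γ (some (.neg (.or A B)))
  | negOrE1 {Γ A B} : Deriv Γ (some (.neg (.or A B))) → Deriv Γ (some (.neg A))
  | negOrE2 {Γ A B} : Deriv Γ (some (.neg (.or A B))) → Deriv Γ (some (.neg B))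
  | posNotI {Γ A} : Deriv Γ (some (.neg A)) → Deriv Γ (some (.pos (.not A)))
  | posNotE {Γ A} : Deriv Γ (some (.pos (.not A))) → Deriv Γ (some (.neg A))
  | negNotI {Γ A} : Deriv Γ (some (.pos A)) → Deriv Γ (some (.neg (.not A)))
  | negNotE {Γ A} : Deriv Γ (some (.neg (.not A))) → Deriv Γ (some (.pos A))
  | posImpI {Γ A B} : Deriv (insert (.pos A) Γ) (some (.pos B)) →
      Deriv Γ (some (.pos (.imp A B)))
  | posImpE {Γ A B} : Deriv Γ (some (.pos (.imp A B))) → Deriv Γ (some (.pos A)) →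
      Deriv Γ (some (.pos B))
  | negImpI {Γ A B} : Deriv Γ (some (.pos A)) → Deriv Γ (some (.neg B)) →
      Deriv Γ (some (.neg (.imp A B)))
  | negImpE1 {Γ A B} : Deriv Γ (some (.neg (.imp A B))) → Deriv Γ (some (.pos A))
  | negImpE2 {Γ A B} : Deriv Γ (some (.neg (.imp A B))) → Deriv Γ (some (.neg B))
  | falsum {Γ α} : Deriv Γ (some α) → Deriv Γ (some α.conj) → Deriv Γ none
  | raa {Γ α} : Deriv (insert α Γ) none → Deriv Γ (some α.conj)

def PropF.eval (v : ℕ → Bool) : PropF → Bool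
  | .atom n => v n
  | .and A B => A.eval v && B.eval v
  | .or A B => A.eval v || B.eval v
  | .not A => !(A.eval v)
  | .imp A B => !(A.eval v) || B.eval v

/-- `v ⊨ c`: a conclusion (statement or ⊥) is satisfied by a valuation. -/
def Sat (v : ℕ → Bool) : Option Stmt → Prop
  | none => False
  | some (.pos A) => A.eval v = true
  | some (.neg A) => A.eval v = false

theorem bcl_sound_and_consistent :
    (∀ (Γ : Set Stmt) (c : Option Stmt), Deriv Γ c →
        ∀ v : ℕ → Bool, (∀ α ∈ Γ, Sat v (some α)) → Sat v c) ∧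
      ¬ Deriv (∅ : Set Stmt) none := by
  have sound : ∀ (Γ : Set Stmt) (c : Option Stmt), Deriv Γ c →
      ∀ v : ℕ → Bool, (∀ α ∈ Γ, Sat v (some α)) → Sat v c := by
    intro Γ c h
    induction h with
    | hyp h => intro v hv; exact hv _ h
    | posAndI _ _ ih1 ih2 =>
      intro v hv; have h1 := ih1 v hv; have h2 := ih2 v hv
      simp [Sat] at h1 h2 ⊢; simp [PropF.eval, h1, h2]
    | posAndE1 _ ih =>
      intro v hv; have h1 := ih v hv; simp [Sat, PropF.eval] at h1 ⊢; exact h1.1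
    | posAndE2 _ ih =>
      intro v hv; have h1 := ih v hv; simp [Sat, PropF.eval] at h1 ⊢; exact h1.2
    | negAndI1 _ ih =>
      intro v hv; have h1 := ih v hv; simp [Sat] at h1 ⊢; simp [PropF.eval, h1]
    | negAndI2 _ ih =>
      intro v hv; have h1 := ih v hv; simp [Sat] at h1 ⊢; simp [PropF.eval, h1]
    | @negAndE _ A B _ _ _ _ ih1 ih2 ih3 =>
      intro v hv; have h1 := ih1 v hv
      simp [Sat, PropF.eval] at h1
      cases hA : PropF.eval v A with
      | false =>
        exact ih2 v (by intro α hα; rcases hα with rfl | hα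
                        · simpa [Sat] using hA
                        · exact hv _ hα)
      | true =>
        have hB : PropF.eval v B = false := by simpa [hA] using h1
        exact ih3 v (by intro α hα; rcases hα with rfl | hα
                        · simpa [Sat] using hB
                        · exact hv _ hα)
    | posOrI1 _ ih =>
      intro v hv; have h1 := ih v hv; simp [Sat] at h1 ⊢; simp [PropF.eval, h1]
    | posOrI2 _ ih =>
      intro v hv; have h1 := ih v hv; simp [Sat] at h1 ⊢; simp [PropF.eval, h1]
    | @posOrE _ A B _ _ _ _ ih1 ih2 ih3 =>
      intro v hv; have h1 := ih1 v hv
      simp [Sat, PropF.eval] at h1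
      cases hA : PropF.eval v A with
      | true =>
        exact ih2 v (by intro α hα; rcases hα with rfl | hα
                        · simpa [Sat] using hA
                        · exact hv _ hα)
      | false =>
        have hB : PropF.eval v B = true := by simpa [hA] using h1
        exact ih3 v (by intro α hα; rcases hα with rfl | hα
                        · simpa [Sat] using hB
                        · exact hv _ hα)
    | negOrI _ _ ih1 ih2 =>
      intro v hv; have h1 := ih1 v hv; have h2 := ih2 v hv
      simp [Sat] at h1 h2 ⊢; simp [PropF.eval, h1, h2]
    | negOrE1 _ ih =>
      intro v hv; have h1 := ih v hv; simp [Sat, PropF.eval] at h1 ⊢; exact h1.1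
    | negOrE2 _ ih =>
      intro v hv; have h1 := ih v hv; simp [Sat, PropF.eval] at h1 ⊢; exact h1.2
    | posNotI _ ih =>
      intro v hv; have h1 := ih v hv; simp [Sat] at h1 ⊢; simp [PropF.eval, h1]
    | posNotE _ ih =>
      intro v hv; have h1 := ih v hv; simp [Sat, PropF.eval] at h1 ⊢; exact h1
    | negNotI _ ih =>
      intro v hv; have h1 := ih v hv; simp [Sat] at h1 ⊢; simp [PropF.eval, h1]
    | negNotE _ ih =>
      intro v hv; have h1 := ih v hv; simp [Sat, PropF.eval] at h1 ⊢; exact h1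
    | @posImpI _ A B _ ih =>
      intro v hv
      cases hA : PropF.eval v A with
      | false => simp [Sat, PropF.eval, hA]
      | true =>
        have hB := ih v (by intro α hα; rcases hα with rfl | hα
                            · simpa [Sat] using hA
                            · exact hv _ hα)
        simp [Sat] at hB; simp [Sat, PropF.eval, hB]
    | posImpE _ _ ih1 ih2 =>
      intro v hv; have h1 := ih1 v hv; have h2 := ih2 v hv
      simp [Sat, PropF.eval] at h1 h2 ⊢
      simpa [h2] using h1
    | negImpI _ _ ih1 ih2 =>
      intro v hv; have h1 := ih1 v hv; have h2 := ih2 v hv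
      simp [Sat] at h1 h2 ⊢; simp [PropF.eval, h1, h2]
    | negImpE1 _ ih =>
      intro v hv; have h1 := ih v hv; simp [Sat, PropF.eval] at h1 ⊢; exact h1.1
    | negImpE2 _ ih =>
      intro v hv; have h1 := ih v hv; simp [Sat, PropF.eval] at h1 ⊢; exact h1.2
    | @falsum _ α _ _ ih1 ih2 =>
      intro v hv; have h1 := ih1 v hv; have h2 := ih2 v hv
      cases α <;> simp [Sat, Stmt.conj] at h1 h2 <;> simp [h1] at h2
    | @raa _ α _ ih =>
      intro v hv
      by_cases hα : Sat v (some α)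
      · exact absurd (ih v (by intro β hβ; rcases hβ with rfl | hβ
                               · exact hα
                               · exact hv _ hβ)) (by simp [Sat])
      · cases α with
        | pos A => simp [Sat] at hα; simpa [Stmt.conj, Sat] using hα
        | neg A => simp [Sat] at hα; simpa [Stmt.conj, Sat] using hα
  refine ⟨sound, fun h => ?_⟩
  exact sound _ _ h (fun _ => true) (by simp)
end

section
/- In bilateral classical logic BCL, the two coordination systems are interadmissible with a unilateral classical formulation: Γ ⊢_BCL +A holds if and only if {B | +B ∈ Γ} ∪ {¬B | −B ∈ Γ} ⊢ A in standard classical propositional natural deduction. -/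
/-- Standard unilateral classical propositional natural deduction. -/
inductive CDeriv : Set PropF → PropF → Prop
  | hyp {Γ A} : A ∈ Γ → CDeriv Γ A
  | andI {Γ A B} : CDeriv Γ A → CDeriv Γ B → CDeriv Γ (.and A B)
  | andE1 {Γ A B} : CDeriv Γ (.and A B) → CDeriv Γ A
  | andE2 {Γ A B} : CDeriv Γ (.and A B) → CDeriv Γ B
  | orI1 {Γ A B} : CDeriv Γ A → CDeriv Γ (.or A B)
  | orI2 {Γ A B} : CDeriv Γ B → CDeriv Γ (.or A B)
  | orE {Γ A B C} : CDeriv Γ (.or A B) → CDeriv (insert A Γ) C →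
      CDeriv (insert B Γ) C → CDeriv Γ C
  | impI {Γ A B} : CDeriv (insert A Γ) B → CDeriv Γ (.imp A B)
  | impE {Γ A B} : CDeriv Γ (.imp A B) → CDeriv Γ A → CDeriv Γ B
  | notI {Γ A B} : CDeriv (insert A Γ) B → CDeriv (insert A Γ) (.not B) →
      CDeriv Γ (.not A)
  | notE {Γ A B} : CDeriv Γ A → CDeriv Γ (.not A) → CDeriv Γ B
  | raa {Γ A B} : CDeriv (insert (.not A) Γ) B → CDeriv (insert (.not A) Γ) (.not B) →
      CDeriv Γ A

/-- Translation of bilateral statements into unilateral formulas. -/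
def Stmt.trans : Stmt → PropF
  | .pos A => A
  | .neg A => .not A

namespace BclAux

open Stmt

/-- Weakening for classical natural deduction. -/
theorem cweak {Δ : Set PropF} {A : PropF} (h : CDeriv Δ A) :
    ∀ {Δ' : Set PropF}, Δ ⊆ Δ' → CDeriv Δ' A := by
  induction h with
  | hyp h => exact fun s => .hyp (s h)
  | andI _ _ ih1 ih2 => exact fun s => .andI (ih1 s) (ih2 s)
  | andE1 _ ih => exact fun s => .andE1 (ih s)
  | andE2 _ ih => exact fun s => .andE2 (ih s)
  | orI1 _ ih => exact fun s => .orI1 (ih s)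
  | orI2 _ ih => exact fun s => .orI2 (ih s)
  | orE _ _ _ ih ih1 ih2 =>
      exact fun s => .orE (ih s) (ih1 (Set.insert_subset_insert s))
        (ih2 (Set.insert_subset_insert s))
  | impI _ ih => exact fun s => .impI (ih (Set.insert_subset_insert s))
  | impE _ _ ih1 ih2 => exact fun s => .impE (ih1 s) (ih2 s)
  | notI _ _ ih1 ih2 =>
      exact fun s => .notI (ih1 (Set.insert_subset_insert s))
        (ih2 (Set.insert_subset_insert s))
  | notE _ _ ih1 ih2 => exact fun s => .notE (ih1 s) (ih2 s)
  | raa _ _ ih1 ih2 =>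
      exact fun s => .raa (ih1 (Set.insert_subset_insert s))
        (ih2 (Set.insert_subset_insert s))

/-- Double negation elimination. -/
theorem dne {Δ : Set PropF} {A : PropF} (h : CDeriv Δ (.not (.not A))) :
    CDeriv Δ A :=
  .raa (.hyp (Set.mem_insert _ _)) (cweak h (Set.subset_insert _ _))

theorem conj_conj (α : Stmt) : α.conj.conj = α := by cases α <;> rfl

/-- Weakening for BCL. -/
theorem dweak {Γ : Set Stmt} {o : Option Stmt} (h : Deriv Γ o) :
    ∀ {Γ' : Set Stmt}, Γ ⊆ Γ' → Deriv Γ' o := by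
  induction h with
  | hyp h => exact fun s => .hyp (s h)
  | posAndI _ _ ih1 ih2 => exact fun s => .posAndI (ih1 s) (ih2 s)
  | posAndE1 _ ih => exact fun s => .posAndE1 (ih s)
  | posAndE2 _ ih => exact fun s => .posAndE2 (ih s)
  | negAndI1 _ ih => exact fun s => .negAndI1 (ih s)
  | negAndI2 _ ih => exact fun s => .negAndI2 (ih s)
  | negAndE _ _ _ ih ih1 ih2 =>
      exact fun s => .negAndE (ih s) (ih1 (Set.insert_subset_insert s))
        (ih2 (Set.insert_subset_insert s))
  | posOrI1 _ ih => exact fun s => .posOrI1 (ih s)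
  | posOrI2 _ ih => exact fun s => .posOrI2 (ih s)
  | posOrE _ _ _ ih ih1 ih2 =>
      exact fun s => .posOrE (ih s) (ih1 (Set.insert_subset_insert s))
        (ih2 (Set.insert_subset_insert s))
  | negOrI _ _ ih1 ih2 => exact fun s => .negOrI (ih1 s) (ih2 s)
  | negOrE1 _ ih => exact fun s => .negOrE1 (ih s)
  | negOrE2 _ ih => exact fun s => .negOrE2 (ih s)
  | posNotI _ ih => exact fun s => .posNotI (ih s)
  | posNotE _ ih => exact fun s => .posNotE (ih s)
  | negNotI _ ih => exact fun s => .negNotI (ih s)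
  | negNotE _ ih => exact fun s => .negNotE (ih s)
  | posImpI _ ih => exact fun s => .posImpI (ih (Set.insert_subset_insert s))
  | posImpE _ _ ih1 ih2 => exact fun s => .posImpE (ih1 s) (ih2 s)
  | negImpI _ _ ih1 ih2 => exact fun s => .negImpI (ih1 s) (ih2 s)
  | negImpE1 _ ih => exact fun s => .negImpE1 (ih s)
  | negImpE2 _ ih => exact fun s => .negImpE2 (ih s)
  | falsum _ _ ih1 ih2 => exact fun s => .falsum (ih1 s) (ih2 s)
  | raa _ ih => exact fun s => .raa (ih (Set.insert_subset_insert s))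

/-- Ex falso in BCL. -/
theorem dexfalso {Γ : Set Stmt} (h : Deriv Γ none) (α : Stmt) :
    Deriv Γ (some α) := by
  have := Deriv.raa (Γ := Γ) (α := α.conj) (dweak h (Set.subset_insert _ _))
  rwa [conj_conj] at this

def Goal (Γ : Set Stmt) : Option Stmt → Prop
  | some α => CDeriv (Stmt.trans '' Γ) α.trans
  | none => ∀ B, CDeriv (Stmt.trans '' Γ) B

theorem imgInsert (α : Stmt) (Γ : Set Stmt) :
    Stmt.trans '' insert α Γ = insert α.trans (Stmt.trans '' Γ) :=
  Set.image_insert_eq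

/-- Forward direction: BCL derivations translate to classical ones. -/
theorem fwd {Γ : Set Stmt} {o : Option Stmt} (h : Deriv Γ o) : Goal Γ o := by
  induction h with
  | @hyp Γ α h => exact CDeriv.hyp ⟨α, h, rfl⟩
  | posAndI _ _ ih1 ih2 => exact .andI ih1 ih2
  | posAndE1 _ ih => exact .andE1 ih
  | posAndE2 _ ih => exact .andE2 ih
  | @negAndI1 Γ A B _ ih =>
      exact .notI (.andE1 (.hyp (Set.mem_insert _ _))) (cweak ih (Set.subset_insert _ _))
  | @negAndI2 Γ A B _ ih =>
      exact .notI (.andE2 (.hyp (Set.mem_insert _ _))) (cweak ih (Set.subset_insert _ _))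
  | @negAndE Γ A B α _ _ _ ih ih1 ih2 =>
      simp only [Goal] at ih ih1 ih2 ⊢
      rw [imgInsert] at ih1 ih2
      cases α with
      | pos C =>
        set Γt := Stmt.trans '' Γ
        -- raa with ¬C
        apply CDeriv.raa (B := PropF.and A B)
        · -- insert ¬C Γt ⊢ A ∧ B
          have hA : CDeriv (insert (.not C) Γt) A := by
            apply dne
            apply CDeriv.notI (B := C)
            · exact cweak ih1 (Set.insert_subset_insert (Set.subset_insert _ _))
            · exact .hyp (Set.mem_insert_of_mem _ (Set.mem_insert _ _))
          have hB : CDeriv (insert (.not C) Γt) B := by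
            apply dne
            apply CDeriv.notI (B := C)
            · exact cweak ih2 (Set.insert_subset_insert (Set.subset_insert _ _))
            · exact .hyp (Set.mem_insert_of_mem _ (Set.mem_insert _ _))
          exact .andI hA hB
        · exact cweak ih (Set.subset_insert _ _)
      | neg C =>
        set Γt := Stmt.trans '' Γ
        show CDeriv Γt (.not C)
        apply CDeriv.notI (B := PropF.and A B)
        · have hA : CDeriv (insert C Γt) A := by
            apply dne
            apply CDeriv.notI (B := C)
            · exact .hyp (Set.mem_insert_of_mem _ (Set.mem_insert _ _))
            · exact cweak ih1 (Set.insert_subset_insert (Set.subset_insert _ _))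
          have hB : CDeriv (insert C Γt) B := by
            apply dne
            apply CDeriv.notI (B := C)
            · exact .hyp (Set.mem_insert_of_mem _ (Set.mem_insert _ _))
            · exact cweak ih2 (Set.insert_subset_insert (Set.subset_insert _ _))
          exact .andI hA hB
        · exact cweak ih (Set.subset_insert _ _)
  | posOrI1 _ ih => exact .orI1 ih
  | posOrI2 _ ih => exact .orI2 ih
  | @posOrE Γ A B α _ _ _ ih ih1 ih2 =>
      simp only [Goal] at ih ih1 ih2 ⊢
      rw [imgInsert] at ih1 ih2
      exact .orE ih ih1 ih2
  | @negOrI Γ A B _ _ ih1 ih2 =>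
      apply CDeriv.notI (B := A)
      · exact CDeriv.orE (.hyp (Set.mem_insert _ _)) (.hyp (Set.mem_insert _ _))
          (CDeriv.notE (.hyp (Set.mem_insert _ _))
            (cweak ih2 ((Set.subset_insert _ _).trans (Set.subset_insert _ _))))
      · exact cweak ih1 (Set.subset_insert _ _)
  | @negOrE1 Γ A B _ ih =>
      exact .notI (.orI1 (.hyp (Set.mem_insert _ _))) (cweak ih (Set.subset_insert _ _))
  | @negOrE2 Γ A B _ ih =>
      exact .notI (.orI2 (.hyp (Set.mem_insert _ _))) (cweak ih (Set.subset_insert _ _))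
  | posNotI _ ih => exact ih
  | posNotE _ ih => exact ih
  | @negNotI Γ A _ ih =>
      exact .notI (cweak ih (Set.subset_insert _ _)) (.hyp (Set.mem_insert _ _))
  | negNotE _ ih => exact dne ih
  | @posImpI Γ A B _ ih =>
      simp only [Goal] at ih ⊢
      rw [imgInsert] at ih
      exact .impI ih
  | posImpE _ _ ih1 ih2 => exact .impE ih1 ih2
  | @negImpI Γ A B _ _ ih1 ih2 =>
      apply CDeriv.notI (B := B)
      · exact CDeriv.impE (.hyp (Set.mem_insert _ _)) (cweak ih1 (Set.subset_insert _ _))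
      · exact cweak ih2 (Set.subset_insert _ _)
  | @negImpE1 Γ A B _ ih =>
      apply CDeriv.raa (B := PropF.imp A B)
      · apply CDeriv.impI
        exact CDeriv.notE (.hyp (Set.mem_insert _ _))
          (.hyp (Set.mem_insert_of_mem _ (Set.mem_insert _ _)))
      · exact cweak ih (Set.subset_insert _ _)
  | @negImpE2 Γ A B _ ih =>
      apply CDeriv.notI (B := PropF.imp A B)
      · exact .impI (.hyp (Set.mem_insert_of_mem _ (Set.mem_insert _ _)))
      · exact cweak ih (Set.subset_insert _ _)
  | @falsum Γ α _ _ ih1 ih2 =>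
      intro B
      cases α with
      | pos C => exact CDeriv.notE ih1 ih2
      | neg C => exact CDeriv.notE ih2 ih1
  | @raa Γ α _ ih =>
      cases α with
      | pos C =>
        simp only [Goal] at ih ⊢
        simp only [imgInsert] at ih
        exact CDeriv.notI (ih C) (ih (.not C))
      | neg C =>
        simp only [Goal] at ih ⊢
        simp only [imgInsert] at ih
        exact CDeriv.raa (ih C) (ih (.not C))

/-- Backward direction. -/
theorem bwd {Δ : Set PropF} {A : PropF} (h : CDeriv Δ A) :
    ∀ {Γ : Set Stmt}, Stmt.trans '' Γ = Δ → Deriv Γ (some (.pos A)) := by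
  induction h with
  | @hyp Δ A h =>
      intro Γ e
      subst e
      obtain ⟨α, hα, he⟩ := h
      cases α with
      | pos B => cases he; exact .hyp hα
      | neg B => cases he; exact .posNotI (.hyp hα)
  | andI _ _ ih1 ih2 => exact fun e => .posAndI (ih1 e) (ih2 e)
  | andE1 _ ih => exact fun e => .posAndE1 (ih e)
  | andE2 _ ih => exact fun e => .posAndE2 (ih e)
  | orI1 _ ih => exact fun e => .posOrI1 (ih e)
  | orI2 _ ih => exact fun e => .posOrI2 (ih e)
  | @orE Δ A B C _ _ _ ih ih1 ih2 =>
      intro Γ e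
      refine .posOrE (ih e) (ih1 ?_) (ih2 ?_) <;>
        (rw [imgInsert, e]; rfl)
  | @impI Δ A B _ ih =>
      intro Γ e
      refine .posImpI (ih ?_)
      rw [imgInsert, e]; rfl
  | impE _ _ ih1 ih2 => exact fun e => .posImpE (ih1 e) (ih2 e)
  | @notI Δ A B _ _ ih1 ih2 =>
      intro Γ e
      have e' : Stmt.trans '' insert (Stmt.pos A) Γ = insert A Δ := by
        rw [imgInsert, e]; rfl
      have hfals : Deriv (insert (Stmt.pos A) Γ) none :=
        .falsum (α := .pos B) (ih1 e') (.posNotE (ih2 e'))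
      exact .posNotI (.raa hfals)
  | @notE Δ A B _ _ ih1 ih2 =>
      intro Γ e
      have hfals : Deriv Γ none := .falsum (α := .pos A) (ih1 e) (.posNotE (ih2 e))
      exact dexfalso hfals _
  | @raa Δ A B _ _ ih1 ih2 =>
      intro Γ e
      have e' : Stmt.trans '' insert (Stmt.neg A) Γ = insert (.not A) Δ := by
        rw [imgInsert, e]; rfl
      have hfals : Deriv (insert (Stmt.neg A) Γ) none :=
        .falsum (α := .pos B) (ih1 e') (.posNotE (ih2 e'))
      exact Deriv.raa (α := .neg A) hfals

end BclAux

theorem bcl_unilateral_interadmissible (Γ : Set Stmt) (A : PropF) :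
    Deriv Γ (some (Stmt.pos A)) ↔ CDeriv (Stmt.trans '' Γ) A := by
  exact ⟨fun h => BclAux.fwd h, fun h => BclAux.bwd h rfl⟩
end
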